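/- Let R be an integral domain and ⋆ a semistar operation of finite type on R. If R is ⋆-stable and ⋆-integrally closed (R^{[⋆]} = R), then R is a Prüfer v-multiplication domain and ⋆ = t = w on R. -/

import Mathlib

noncomputable section

section Defs

variable (R K : Type*) [CommRing R] [CommRing K] [Algebra R K]

/-- The residual `(E : F) = {x ∈ K : xF ⊆ E}` of two `R`-submodules of `K`. -/
def resid (E F : Submodule R K) : Submodule R K where
  carrier := {x : K | ∀ y ∈ F, x * y ∈ E}
  add_mem' := by
    intro a b ha hb y hy
    simpa only [Set.mem_setOf_eq, add_mul] using E.add_mem (ha y hy) (hb y hy)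
  zero_mem' := by
    intro y hy
    simp
  smul_mem' := by
    intro c x hx y hy
    simpa [smul_mul_assoc] using E.smul_mem c (hx y hy)

/-- The image of an ideal of `R` as an `R`-submodule of `K`. -/
def idealToSub (I : Ideal R) : Submodule R K :=
  Submodule.map (Algebra.linearMap R K) I

end Defs

/-- A semistar operation on an integral domain `R` with quotient field `K`. -/
structure SemistarOp (R K : Type*) [CommRing R] [Field K] [Algebra R K] where
  star : Submodule R K → Submodule R K
  star_smul : ∀ x : K, x ≠ 0 → ∀ E : Submodule R K, E ≠ ⊥ →
    star (Submodule.span R {x} * E) = Submodule.span R {x} * star E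
  mono : ∀ E F : Submodule R K, E ≠ ⊥ → E ≤ F → star E ≤ star F
  le_star : ∀ E : Submodule R K, E ≠ ⊥ → E ≤ star E
  idem : ∀ E : Submodule R K, E ≠ ⊥ → star (star E) = star E

section Ops

variable (R K : Type*) [CommRing R] [Field K] [Algebra R K]

/-- The `v`-operation (divisorial closure) `E ↦ (R : (R : E))`. -/
def vop (E : Submodule R K) : Submodule R K := resid R K 1 (resid R K 1 E)

/-- The `t`-operation, the finite-type version of `v`. -/
def top (E : Submodule R K) : Submodule R K :=
  ⨆ (F : Submodule R K) (_ : F.FG ∧ F ≠ ⊥ ∧ F ≤ E), vop R K F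

/-- The `w`-operation `E ↦ ⋃ {(E : F) : F f.g. nonzero with F^t = R}`. -/
def wop (E : Submodule R K) : Submodule R K :=
  ⨆ (F : Submodule R K) (_ : F.FG ∧ F ≠ ⊥ ∧ top R K F = 1), resid R K E F

/-- `M` is a maximal proper `f`-closed ideal (e.g. a `⋆`-maximal ideal). -/
def IsOpMaxIdeal (f : Submodule R K → Submodule R K) (M : Submodule R K) : Prop :=
  M ≠ ⊥ ∧ M < 1 ∧ f M = M ∧
    ∀ J : Submodule R K, J ≠ ⊥ → J < 1 → f J = J → M ≤ J → M = J

/-- The localization `E R_P` of a submodule `E` at a prime `P`, inside `K`. -/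
def locSub (P : Ideal R) (E : Submodule R K) : Submodule R K :=
  Submodule.span R {x : K | ∃ s : R, s ∉ P ∧ s • x ∈ E}

/-- The subring of `K` determined by the submodule `T` is a stable domain:
every nonzero ideal `E` of `T` is invertible in `(E : E)`. -/
def SubringStable (T : Submodule R K) : Prop :=
  ∀ E : Submodule R K, E ≠ ⊥ → E ≤ T → T * E ≤ E →
    E * resid R K (resid R K E E) E = resid R K E E

/-- The subring of `K` determined by `T` is a divisorial domain: every nonzero
fractional ideal of `T` is divisorial. -/
def SubringDivisorial (T : Submodule R K) : Prop :=
  ∀ J : Submodule R K, J ≠ ⊥ → T * J ≤ J →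
    (∃ x : K, x ≠ 0 ∧ ∀ y ∈ J, x * y ∈ T) →
    resid R K T (resid R K T J) = J

/-- The subring of `K` determined by `T` is `v`-coherent: for every nonzero
finitely generated ideal `I = S·T` of `T`, the ideal `(T : I)` is `v`-finite. -/
def SubringVCoherent (T : Submodule R K) : Prop :=
  ∀ S : Submodule R K, S.FG → S ≠ ⊥ → S ≤ T →
    ∃ H : Submodule R K, H.FG ∧ H ≠ ⊥ ∧
      resid R K T (S * T) = resid R K T (resid R K T (H * T))

/-- `R` has finite character with respect to the maximal ideals singled out by `f`. -/
def OpFiniteCharacter (f : Submodule R K → Submodule R K) : Prop :=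
  ∀ I : Submodule R K, I ≠ ⊥ → I ≤ 1 →
    {M : Submodule R K | IsOpMaxIdeal R K f M ∧ I ≤ M}.Finite

/-- Every nonzero finitely generated ideal is `t`-invertible (PvMD). -/
def IsPvMDsub : Prop :=
  ∀ G : Submodule R K, G.FG → G ≠ ⊥ → G ≤ 1 →
    top R K (G * resid R K 1 G) = 1

end Ops

namespace SemistarOp

variable {R K : Type*} [CommRing R] [Field K] [Algebra R K] (s : SemistarOp R K)

/-- `⋆`-stability for the ideals of the subring determined by `T`. -/
def StarStableOver (T : Submodule R K) : Prop :=
  ∀ E : Submodule R K, E ≠ ⊥ → E ≤ T → T * E ≤ E →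
    s.star (s.star E * resid R K (resid R K (s.star E) (s.star E)) (s.star E))
      = resid R K (s.star E) (s.star E)

/-- `R` is `⋆`-stable: each nonzero ideal `I` is such that `I^⋆` is
`⋆̇`-invertible in `(I^⋆ : I^⋆)`. -/
def StarStable : Prop := s.StarStableOver (1 : Submodule R K)

/-- `⋆` is of finite type. -/
def FinType : Prop :=
  ∀ E : Submodule R K, E ≠ ⊥ →
    s.star E = ⨆ (F : Submodule R K) (_ : F.FG ∧ F ≠ ⊥ ∧ F ≤ E), s.star F

/-- `⋆ = ⋆̃`: the operation is spectral and of finite type, i.e. it is given by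
`E^⋆ = ⋃ {(E : F) : F f.g. nonzero with F^⋆ = R}`. -/
def IsSpectralFT : Prop :=
  ∀ E : Submodule R K, E ≠ ⊥ →
    s.star E = ⨆ (F : Submodule R K) (_ : F.FG ∧ F ≠ ⊥ ∧ s.star F = 1), resid R K E F

/-- The `⋆`-integral closure `R^{[⋆]} = ⋃ {(F^⋆ : F^⋆) : F f.g. nonzero}`. -/
def starIntClosure : Submodule R K :=
  ⨆ (F : Submodule R K) (_ : F.FG ∧ F ≠ ⊥), resid R K (s.star F) (s.star F)

end SemistarOp


section MoreOps

variable (R K : Type*) [CommRing R] [Field K] [Algebra R K]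

/-- `R` is `w`-stable: for each nonzero ideal `I`, `I^w` is invertible in
`(I^w : I^w)` with respect to the restriction of `w`. -/
def WStable : Prop :=
  ∀ I : Submodule R K, I ≠ ⊥ → I ≤ 1 →
    wop R K (wop R K I * resid R K (resid R K (wop R K I) (wop R K I)) (wop R K I))
      = resid R K (wop R K I) (wop R K I)

/-- `R` is completely integrally closed in its quotient field `K`. -/
def CICsub : Prop :=
  ∀ x : K, (∃ c : R, c ≠ 0 ∧ ∀ n : ℕ, c • x ^ n ∈ (1 : Submodule R K)) →
    x ∈ (1 : Submodule R K)

/-- `R` is `w`-divisorial: `w = v` on nonzero fractional ideals. -/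
def WDivisorial : Prop :=
  ∀ J : Submodule R K, J ≠ ⊥ →
    (∃ d : R, d ≠ 0 ∧ ∀ x ∈ J, d • x ∈ (1 : Submodule R K)) →
    wop R K J = vop R K J

/-- `R` is a Krull domain: completely integrally closed with the ascending chain
condition on (integral) divisorial ideals. -/
def IsKrullSub : Prop :=
  CICsub R K ∧
    ∀ c : ℕ → Submodule R K,
      (∀ n, c n ≠ ⊥ ∧ c n ≤ 1 ∧ vop R K (c n) = c n) → Monotone c →
        ∃ n, ∀ m, n ≤ m → c m = c n

end MoreOps

end


section Aux

open Submodule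

set_option linter.unusedSectionVars false

variable {R K : Type*} [CommRing R] [IsDomain R] [Field K] [Algebra R K] [IsFractionRing R K]

lemma mem_resid' {E F : Submodule R K} {x : K} :
    x ∈ resid R K E F ↔ ∀ y ∈ F, x * y ∈ E := Iff.rfl

lemma le_resid_iff {E F G : Submodule R K} :
    G ≤ resid R K E F ↔ G * F ≤ E := by
  constructor
  · intro h
    exact Submodule.mul_le.2 fun m hm n hn => (h hm) n hn
  · intro h m hm n hn
    exact h (Submodule.mul_mem_mul hm hn)

lemma resid_mul_le (E F : Submodule R K) : resid R K E F * F ≤ E :=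
  le_resid_iff.1 le_rfl

lemma one_le_resid_one {F : Submodule R K} (h : F ≤ 1) : 1 ≤ resid R K 1 F :=
  le_resid_iff.2 (by rw [one_mul]; exact h)

lemma one_le_resid_self (M : Submodule R K) : 1 ≤ resid R K M M :=
  le_resid_iff.2 (by rw [one_mul])

lemma one_ne_bot' : (1 : Submodule R K) ≠ ⊥ :=
  (Submodule.ne_bot_iff _).2 ⟨1, Submodule.one_le.1 le_rfl, one_ne_zero⟩

lemma one_fg' : (1 : Submodule R K).FG := by
  rw [Submodule.one_eq_span]; exact Submodule.fg_span_singleton 1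

lemma span_ne_bot' {x : K} (h : x ≠ 0) : Submodule.span R {x} ≠ ⊥ :=
  fun H => h (Submodule.span_singleton_eq_bot.1 H)

lemma mul_ne_bot' {E F : Submodule R K} (hE : E ≠ ⊥) (hF : F ≠ ⊥) : E * F ≠ ⊥ := by
  obtain ⟨x, hx, hx0⟩ := (Submodule.ne_bot_iff _).1 hE
  obtain ⟨y, hy, hy0⟩ := (Submodule.ne_bot_iff _).1 hF
  exact (Submodule.ne_bot_iff _).2 ⟨x * y, Submodule.mul_mem_mul hx hy, mul_ne_zero hx0 hy0⟩

lemma span_inv_mul_span_mul (c : K) (hc : c ≠ 0) (M : Submodule R K) :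
    Submodule.span R {c⁻¹} * (Submodule.span R {c} * M) = M := by
  rw [← mul_assoc, Submodule.span_mul_span, Set.singleton_mul_singleton,
    inv_mul_cancel₀ hc, ← Submodule.one_eq_span, one_mul]

lemma exists_denom (F : Submodule R K) (hfg : F.FG) :
    ∃ d : R, d ≠ 0 ∧ Submodule.span R {algebraMap R K d} * F ≤ 1 := by
  obtain ⟨t, rfl⟩ := hfg
  obtain ⟨b, hb⟩ := IsLocalization.exist_integer_multiples_of_finset (nonZeroDivisors R) (S := K) t
  refine ⟨(b : R), nonZeroDivisors.ne_zero b.2, ?_⟩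
  rw [Submodule.span_mul_span]
  rw [Submodule.span_le]
  rintro z hz
  rw [Set.mem_mul] at hz
  obtain ⟨u, hu, a, ha, rfl⟩ := hz
  rw [Set.mem_singleton_iff] at hu
  subst hu
  obtain ⟨r, hr⟩ := hb a ha
  refine Submodule.mem_one.2 ⟨r, ?_⟩
  rw [hr, Algebra.smul_def]

variable (s : SemistarOp R K)

lemma star_ne_bot {E : Submodule R K} (hE : E ≠ ⊥) : s.star E ≠ ⊥ := by
  intro h
  exact hE (le_bot_iff.1 (h ▸ s.le_star E hE))

/-- L1 : `R^⋆ = R`. -/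
lemma starOne (hic : s.starIntClosure = 1) : s.star 1 = 1 := by
  refine le_antisymm ?_ (s.le_star 1 one_ne_bot')
  intro y hy
  by_cases hy0 : y = 0
  · subst hy0; exact Submodule.zero_mem _
  have h1 : Submodule.span R {y} * s.star 1 ≤ s.star 1 := by
    have h2 : Submodule.span R {y} * s.star 1 = s.star (Submodule.span R {y}) := by
      rw [← s.star_smul y hy0 1 one_ne_bot', mul_one]
    rw [h2]
    have h3 : s.star (Submodule.span R {y}) ≤ s.star (s.star 1) :=
      s.mono _ _ (span_ne_bot' hy0) (Submodule.span_le.2 (Set.singleton_subset_iff.2 hy))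
    rwa [s.idem 1 one_ne_bot'] at h3
  have h4 : y ∈ resid R K (s.star 1) (s.star 1) := fun z hz =>
    h1 (Submodule.mul_mem_mul (Submodule.mem_span_singleton_self y) hz)
  have h5 : resid R K (s.star 1) (s.star 1) ≤ s.starIntClosure :=
    le_iSup₂ (f := fun F (_ : F.FG ∧ F ≠ ⊥) => resid R K (s.star F) (s.star F)) 1
      ⟨one_fg', one_ne_bot'⟩
  rw [hic] at h5
  exact h5 h4

/-- `A^⋆ · B ≤ (A·B)^⋆`. -/
lemma star_mul_le {A : Submodule R K} (hA : A ≠ ⊥) (B : Submodule R K) :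
    s.star A * B ≤ s.star (A * B) := by
  refine Submodule.mul_le.2 fun a ha b hb => ?_
  by_cases hb0 : b = 0
  · subst hb0; rw [mul_zero]; exact Submodule.zero_mem _
  have h1 : Submodule.span R {b} * A ≤ A * B := by
    rw [mul_comm]
    exact mul_le_mul_right (Submodule.span_le.2 (Set.singleton_subset_iff.2 hb)) _
  have h2 : s.star (Submodule.span R {b} * A) ≤ s.star (A * B) :=
    s.mono _ _ (mul_ne_bot' (span_ne_bot' hb0) hA) h1
  rw [s.star_smul b hb0 A hA] at h2
  have h3 : a * b ∈ Submodule.span R {b} * s.star A := by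
    rw [mul_comm a b]
    exact Submodule.mul_mem_mul (Submodule.mem_span_singleton_self b) ha
  exact h2 h3

/-- L2 : `(1 : E^⋆) = (1 : E)` when `R^⋆ = R`. -/
lemma resid_one_star {E : Submodule R K} (hE : E ≠ ⊥) (h1 : s.star 1 = 1) :
    resid R K 1 (s.star E) = resid R K 1 E := by
  refine le_antisymm (fun x hx y hy => hx y (s.le_star E hE hy)) ?_
  intro x hx
  by_cases hx0 : x = 0
  · subst hx0; intro y hy; rw [zero_mul]; exact Submodule.zero_mem _
  have h2 : Submodule.span R {x} * E ≤ 1 :=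
    le_resid_iff.1 (Submodule.span_le.2 (Set.singleton_subset_iff.2 hx))
  have h3 : s.star (Submodule.span R {x} * E) ≤ s.star 1 :=
    s.mono _ 1 (mul_ne_bot' (span_ne_bot' hx0) hE) h2
  rw [s.star_smul x hx0 E hE, h1] at h3
  intro y hy
  exact h3 (Submodule.mul_mem_mul (Submodule.mem_span_singleton_self x) hy)

/-- L3 : `(F^⋆ : F^⋆) = R` for f.g. nonzero `F`. -/
lemma star_resid_self (hic : s.starIntClosure = 1) {F : Submodule R K}
    (hfg : F.FG) (hF : F ≠ ⊥) : resid R K (s.star F) (s.star F) = 1 := by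
  refine le_antisymm ?_ (one_le_resid_self _)
  have h5 : resid R K (s.star F) (s.star F) ≤ s.starIntClosure :=
    le_iSup₂ (f := fun F (_ : F.FG ∧ F ≠ ⊥) => resid R K (s.star F) (s.star F)) F ⟨hfg, hF⟩
  rwa [hic] at h5

/-- L4 : stability at f.g. ideals. -/
lemma star_stable_fg (hic : s.starIntClosure = 1) (hst : s.StarStable)
    {F : Submodule R K} (hfg : F.FG) (hF : F ≠ ⊥) (hle : F ≤ 1) :
    s.star (s.star F * resid R K 1 F) = 1 := by
  have h1 : s.star 1 = 1 := starOne s hic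
  have h := hst F hF hle (by rw [one_mul])
  rwa [star_resid_self s hic hfg hF, resid_one_star s hF h1] at h

/-- L5 : `F^⋆ = F^v` for f.g. nonzero ideals `F ≤ R`. -/
lemma star_eq_vop_of_le_one (hic : s.starIntClosure = 1) (hst : s.StarStable)
    {F : Submodule R K} (hfg : F.FG) (hF : F ≠ ⊥) (hle : F ≤ 1) :
    s.star F = vop R K F := by
  have h1 : s.star 1 = 1 := starOne s hic
  set J : Submodule R K := resid R K 1 F with hJ
  have hJ1 : (1 : Submodule R K) ≤ J := one_le_resid_one hle
  have hJbot : J ≠ ⊥ := fun h => one_ne_bot' (le_bot_iff.1 (h ▸ hJ1))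
  have hP : s.star (s.star F * J) = 1 := star_stable_fg s hic hst hfg hF hle
  have hsF : s.star F ≠ ⊥ := star_ne_bot s hF
  have hPbot : s.star F * J ≠ ⊥ := mul_ne_bot' hsF hJbot
  show s.star F = resid R K 1 J
  refine le_antisymm ?_ ?_
  · intro a ha z hz
    have hz' : z ∈ resid R K 1 (s.star F) := by
      rwa [resid_one_star s hF h1]
    rw [mul_comm]
    exact hz' a ha
  · intro x hx
    by_cases hx0 : x = 0
    · subst hx0; exact Submodule.zero_mem _
    have hxJ : Submodule.span R {x} * J ≤ 1 :=
      le_resid_iff.1 (Submodule.span_le.2 (Set.singleton_subset_iff.2 hx))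
    have hle2 : Submodule.span R {x} * (s.star F * J) ≤ s.star F := by
      have : Submodule.span R {x} * (s.star F * J) = s.star F * (Submodule.span R {x} * J) := by
        ring
      rw [this]
      calc s.star F * (Submodule.span R {x} * J) ≤ s.star F * 1 :=
            mul_le_mul_right hxJ _
        _ = s.star F := mul_one _
    have h5 : s.star (Submodule.span R {x} * (s.star F * J)) ≤ s.star (s.star F) :=
      s.mono _ _ (mul_ne_bot' (span_ne_bot' hx0) hPbot) hle2
    rw [s.idem F hF, s.star_smul x hx0 _ hPbot, hP, mul_one] at h5
    exact h5 (Submodule.mem_span_singleton_self x)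

/-- Residual scaling : `(1 : cE) = c⁻¹ (1 : E)`. -/
lemma resid_smul (c : K) (hc : c ≠ 0) (E : Submodule R K) :
    resid R K 1 (Submodule.span R {c} * E) = Submodule.span R {c⁻¹} * resid R K 1 E := by
  refine le_antisymm ?_ ?_
  · intro x hx
    have h1 : c * x ∈ resid R K 1 E := by
      intro y hy
      have : x * (c * y) ∈ (1 : Submodule R K) :=
        hx _ (Submodule.mul_mem_mul (Submodule.mem_span_singleton_self c) hy)
      have he : c * x * y = x * (c * y) := by ring
      rwa [he]
    refine Submodule.mem_span_singleton_mul.2 ⟨c * x, h1, ?_⟩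
    rw [← mul_assoc, inv_mul_cancel₀ hc, one_mul]
  · refine le_resid_iff.2 ?_
    have he : Submodule.span R {c⁻¹} * resid R K 1 E * (Submodule.span R {c} * E)
        = (Submodule.span R {c⁻¹} * Submodule.span R {c}) * (resid R K 1 E * E) := by
      ring
    rw [he, Submodule.span_mul_span, Set.singleton_mul_singleton, inv_mul_cancel₀ hc,
      ← Submodule.one_eq_span, one_mul]
    exact resid_mul_le _ _

lemma vop_smul (c : K) (hc : c ≠ 0) (E : Submodule R K) :
    vop R K (Submodule.span R {c} * E) = Submodule.span R {c} * vop R K E := by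
  show resid R K 1 (resid R K 1 (Submodule.span R {c} * E)) = _
  rw [resid_smul c hc E, resid_smul c⁻¹ (inv_ne_zero hc), inv_inv]
  rfl

/-- L7 : `F^⋆ = F^v` for all f.g. nonzero `F`. -/
lemma star_eq_vop (hic : s.starIntClosure = 1) (hst : s.StarStable)
    {F : Submodule R K} (hfg : F.FG) (hF : F ≠ ⊥) :
    s.star F = vop R K F := by
  obtain ⟨d, hd0, hdF⟩ := exists_denom F hfg
  set c : K := algebraMap R K d with hcdef
  have hc : c ≠ 0 := fun h => hd0 (IsFractionRing.injective R K (by rw [← hcdef] at *; simpa using h))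
  have hG₀fg : (Submodule.span R {c} * F).FG :=
    Submodule.FG.mul (Submodule.fg_span_singleton c) hfg
  have hG₀bot : Submodule.span R {c} * F ≠ ⊥ := mul_ne_bot' (span_ne_bot' hc) hF
  have h := star_eq_vop_of_le_one s hic hst hG₀fg hG₀bot hdF
  rw [s.star_smul c hc F hF, vop_smul c hc F] at h
  have h2 := congrArg (fun M => Submodule.span R {c⁻¹} * M) h
  simpa only [span_inv_mul_span_mul c hc] using h2

/-- L8 : `⋆ = t`. -/
lemma star_eq_top (hft : s.FinType) (hic : s.starIntClosure = 1) (hst : s.StarStable)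
    {E : Submodule R K} (hE : E ≠ ⊥) : s.star E = top R K E := by
  rw [hft E hE]
  exact iSup_congr fun F => iSup_congr fun hF => star_eq_vop s hic hst hF.1 hF.2.1

/-- L4' : `(G (1:G))^⋆ = 1` for f.g. nonzero ideals `G ≤ 1`. -/
lemma star_mul_resid_one (hic : s.starIntClosure = 1) (hst : s.StarStable)
    {G : Submodule R K} (hfg : G.FG) (hG : G ≠ ⊥) (hle : G ≤ 1) :
    s.star (G * resid R K 1 G) = 1 := by
  have h1 : s.star 1 = 1 := starOne s hic
  have hres1 : (1 : Submodule R K) ≤ resid R K 1 G := one_le_resid_one hle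
  have hresbot : resid R K 1 G ≠ ⊥ := fun h => one_ne_bot' (le_bot_iff.1 (h ▸ hres1))
  have hQbot : G * resid R K 1 G ≠ ⊥ := mul_ne_bot' hG hresbot
  have hQle : G * resid R K 1 G ≤ 1 := by
    rw [mul_comm]; exact resid_mul_le _ _
  have hP : s.star (s.star G * resid R K 1 G) = 1 := star_stable_fg s hic hst hfg hG hle
  have h2 : s.star G * resid R K 1 G ≤ s.star (G * resid R K 1 G) := star_mul_le s hG _
  have h3 : s.star (s.star G * resid R K 1 G) ≤ s.star (s.star (G * resid R K 1 G)) :=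
    s.mono _ _ (mul_ne_bot' (star_ne_bot s hG) hresbot) h2
  rw [hP, s.idem _ hQbot] at h3
  have h4 : s.star (G * resid R K 1 G) ≤ s.star 1 := s.mono _ _ hQbot hQle
  rw [h1] at h4
  exact le_antisymm h4 h3

/-- Compactness : a f.g. `⋆`-unit inside any `Q` with `Q^⋆ = 1`. -/
lemma exists_fg_star_one (hft : s.FinType) {Q : Submodule R K} (hQ : Q ≠ ⊥)
    (hQle : Q ≤ 1) (h1 : s.star 1 = 1) (hQs : s.star Q = 1) :
    ∃ F : Submodule R K, F.FG ∧ F ≠ ⊥ ∧ F ≤ Q ∧ s.star F = 1 := by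
  have hmem : (1 : K) ∈ s.star Q := by rw [hQs]; exact Submodule.one_le.1 le_rfl
  rw [hft Q hQ] at hmem
  rw [iSup_subtype' (p := fun F : Submodule R K => F.FG ∧ F ≠ ⊥ ∧ F ≤ Q)] at hmem
  obtain ⟨q, hq, hq0⟩ := (Submodule.ne_bot_iff _).1 hQ
  have : Nonempty {F : Submodule R K // F.FG ∧ F ≠ ⊥ ∧ F ≤ Q} :=
    ⟨⟨Submodule.span R {q}, Submodule.fg_span_singleton q, span_ne_bot' hq0,
      Submodule.span_le.2 (Set.singleton_subset_iff.2 hq)⟩⟩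
  have hdir : Directed (· ≤ ·)
      (fun i : {F : Submodule R K // F.FG ∧ F ≠ ⊥ ∧ F ≤ Q} => s.star i.1) := by
    rintro ⟨F₁, hF₁⟩ ⟨F₂, hF₂⟩
    refine ⟨⟨F₁ ⊔ F₂, Submodule.FG.sup hF₁.1 hF₂.1,
      fun h => hF₁.2.1 (le_bot_iff.1 (le_sup_left.trans h.le)), sup_le hF₁.2.2 hF₂.2.2⟩,
      s.mono _ _ hF₁.2.1 le_sup_left, s.mono _ _ hF₂.2.1 le_sup_right⟩
  rw [Submodule.mem_iSup_of_directed _ hdir] at hmem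
  obtain ⟨⟨F, hFfg, hFbot, hFle⟩, hF1⟩ := hmem
  refine ⟨F, hFfg, hFbot, hFle, le_antisymm ?_ (Submodule.one_le.2 hF1)⟩
  have := s.mono F 1 hFbot (hFle.trans hQle)
  rwa [h1] at this

/-- `t ≤ w`. -/
lemma star_le_wop (hft : s.FinType) (hic : s.starIntClosure = 1) (hst : s.StarStable)
    {E : Submodule R K} (hE : E ≠ ⊥) : s.star E ≤ wop R K E := by
  have h1 : s.star 1 = 1 := starOne s hic
  rw [hft E hE]
  refine iSup₂_le fun G hG => ?_
  obtain ⟨hGfg, hGbot, hGle⟩ := hG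
  obtain ⟨d, hd0, hdG⟩ := exists_denom G hGfg
  set c : K := algebraMap R K d with hcdef
  have hc : c ≠ 0 := fun h => hd0 (IsFractionRing.injective R K (by rw [← hcdef] at *; simpa using h))
  set G₀ : Submodule R K := Submodule.span R {c} * G with hG₀def
  have hG₀fg : G₀.FG := Submodule.FG.mul (Submodule.fg_span_singleton c) hGfg
  have hG₀bot : G₀ ≠ ⊥ := mul_ne_bot' (span_ne_bot' hc) hGbot
  have hres1 : (1 : Submodule R K) ≤ resid R K 1 G₀ := one_le_resid_one hdG
  have hresbot : resid R K 1 G₀ ≠ ⊥ := fun h => one_ne_bot' (le_bot_iff.1 (h ▸ hres1))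
  set Q : Submodule R K := G₀ * resid R K 1 G₀ with hQdef
  have hQbot : Q ≠ ⊥ := mul_ne_bot' hG₀bot hresbot
  have hQle : Q ≤ 1 := by rw [hQdef, mul_comm]; exact resid_mul_le _ _
  have hQs : s.star Q = 1 := star_mul_resid_one s hic hst hG₀fg hG₀bot hdG
  obtain ⟨F, hFfg, hFbot, hFle, hFs⟩ := exists_fg_star_one s hft hQbot hQle h1 hQs
  have hFt : top R K F = 1 := by
    rw [← star_eq_top s hft hic hst hFbot]; exact hFs
  have hkey : s.star G * F ≤ E := by
    have hsG : s.star G₀ = Submodule.span R {c} * s.star G := s.star_smul c hc G hGbot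
    have hsG' : s.star G = Submodule.span R {c⁻¹} * s.star G₀ := by
      rw [hsG, span_inv_mul_span_mul c hc]
    have hstep : s.star G₀ * resid R K 1 G₀ ≤ 1 := by
      have := resid_mul_le (1 : Submodule R K) (s.star G₀)
      rw [resid_one_star s hG₀bot h1] at this
      rw [mul_comm]; exact this
    calc s.star G * F ≤ s.star G * Q := mul_le_mul_right hFle _
      _ = G₀ * (Submodule.span R {c⁻¹} * (s.star G₀ * resid R K 1 G₀)) := by
          rw [hQdef, hsG']; ring
      _ ≤ G₀ * (Submodule.span R {c⁻¹} * 1) := by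
          refine mul_le_mul_right (mul_le_mul_right hstep _) _
      _ = Submodule.span R {c⁻¹} * G₀ := by rw [mul_one]; ring
      _ = G := by rw [hG₀def, span_inv_mul_span_mul c hc]
      _ ≤ E := hGle
  have hres : s.star G ≤ resid R K E F := le_resid_iff.2 hkey
  refine hres.trans ?_
  exact le_iSup₂ (f := fun F (_ : F.FG ∧ F ≠ ⊥ ∧ top R K F = 1) => resid R K E F) F
    ⟨hFfg, hFbot, hFt⟩

/-- `w ≤ t`. -/
lemma wop_le_star (hft : s.FinType) (hic : s.starIntClosure = 1) (hst : s.StarStable)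
    {E : Submodule R K} (hE : E ≠ ⊥) : wop R K E ≤ s.star E := by
  refine iSup₂_le fun F hF => ?_
  obtain ⟨hFfg, hFbot, hFt⟩ := hF
  have hFs : s.star F = 1 := by rw [star_eq_top s hft hic hst hFbot]; exact hFt
  intro x hx
  by_cases hx0 : x = 0
  · subst hx0; exact Submodule.zero_mem _
  have h2 : Submodule.span R {x} * F ≤ E :=
    le_resid_iff.1 (Submodule.span_le.2 (Set.singleton_subset_iff.2 hx))
  have h3 : s.star (Submodule.span R {x} * F) ≤ s.star E :=
    s.mono _ _ (mul_ne_bot' (span_ne_bot' hx0) hFbot) h2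
  rw [s.star_smul x hx0 F hFbot, hFs, mul_one] at h3
  exact h3 (Submodule.mem_span_singleton_self x)

end Aux

/-- if `⋆` is a semistar operation of finite type and `R` is
`⋆`-stable and `⋆`-integrally closed, then `R` is a PvMD and `⋆ = t = w`. -/
theorem statement_13 {R K : Type*} [CommRing R] [IsDomain R] [Field K] [Algebra R K]
    [IsFractionRing R K] (s : SemistarOp R K) (hft : s.FinType)
    (hst : s.StarStable) (hic : s.starIntClosure = 1) :
    IsPvMDsub R K ∧
      ∀ E : Submodule R K, E ≠ ⊥ → s.star E = top R K E ∧ top R K E = wop R K E := by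
  constructor
  · intro G hfg hbot hle
    have hres1 : (1 : Submodule R K) ≤ resid R K 1 G := one_le_resid_one hle
    have hresbot : resid R K 1 G ≠ ⊥ := fun h => one_ne_bot' (le_bot_iff.1 (h ▸ hres1))
    rw [← star_eq_top s hft hic hst (mul_ne_bot' hbot hresbot)]
    exact star_mul_resid_one s hic hst hfg hbot hle
  · intro E hE
    refine ⟨star_eq_top s hft hic hst hE, ?_⟩
    rw [← star_eq_top s hft hic hst hE]
    exact le_antisymm (star_le_wop s hft hic hst hE) (wop_le_star s hft hic hst hE)
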